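/- Necessity of $2f$-redundancy (abstract deadlock version): let $n, f$ be positive integers with $n \ge 2f + 1$, and let $\{\mathscr{X}_i\}_{i \in \mathscr{H}}$ be nonempty closed convex sets in $\mathbb{R}^m$ indexed by a set $\mathscr{H}$ with $|\mathscr{H}| = n - f$. Suppose there exists a subset $\mathscr{T} \subseteq \mathscr{H}$ with $|\mathscr{T}| = n - 2f$ and a point $x \in \bigcap_{i \in \mathscr{T}} \mathscr{X}_i$ with $x \notin \bigcap_{i \in \mathscr{H}} \mathscr{X}_i$. Consider the dynamics where each agent $i \in \mathscr{T}$ starts at $x_i(0) = x$, $f$ Byzantine agents always send $x$, and each agent in $\mathscr{T}$ retains the $n - f - 1$ closest received values (filtering the furthest $f$) and updates via $x_i(t+1) = \mathrm{P}_{\mathscr{X}_i}[x_i(t) + \alpha \sum_{j \in \mathscr{M}_i(t)} (x_{ji}(t) - x_i(t))]$. Then $x_i(t) = x$ for all $i \in \mathscr{T}$ and all $t \ge 0$, so the agents in $\mathscr{T}$ remain forever at the point $x \notin \bigcap_{i \in \mathscr{H}} \mathscr{X}_i$. -/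
import Mathlib


open Finset

/-- Necessity of `2f`-redundancy (abstract deadlock version): if a subset `T`
of normal agents of size `n - 2f` starts at a common point `x` lying in all
their constraint sets but outside `⋂_{i ∈ H} Xᵢ`, the Byzantine agents always
send `x`, and every normal agent retains the `n - f - 1` closest received
values (discarding the furthest `f`) and updates by a projected consensus step,
then every agent of `T` stays at `x` forever. -/
theorem necessity_of_2f_redundancy
    {m : ℕ} {ι : Type*} [DecidableEq ι]
    (n f : ℕ) (hf : 0 < f) (hn : 2 * f + 1 ≤ n)
    (N H : Finset ι) (hHN : H ⊆ N) (hN : N.card = n) (hH : H.card = n - f)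
    (X : ι → Set (EuclideanSpace ℝ (Fin m)))
    (hne : ∀ i ∈ H, (X i).Nonempty)
    (hcl : ∀ i ∈ H, IsClosed (X i)) (hconv : ∀ i ∈ H, Convex ℝ (X i))
    (T : Finset ι) (hTH : T ⊆ H) (hT : T.card = n - 2 * f)
    (x : EuclideanSpace ℝ (Fin m))
    (hxT : ∀ i ∈ T, x ∈ X i) (hxH : x ∉ ⋂ i ∈ H, X i)
    -- Euclidean projections onto the constraint sets
    (P : ι → EuclideanSpace ℝ (Fin m) → EuclideanSpace ℝ (Fin m))
    (hP : ∀ i ∈ H, ∀ y, P i y ∈ X i ∧ ∀ z ∈ X i, dist y (P i y) ≤ dist y z)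
    -- states of the normal agents
    (xs : ℕ → ι → EuclideanSpace ℝ (Fin m))
    -- received values: `r t j i` is the value agent `i` receives from `j`
    (r : ℕ → ι → ι → EuclideanSpace ℝ (Fin m))
    -- normal agents send their true states
    (hnormal : ∀ t, ∀ j ∈ H, ∀ i, r t j i = xs t j)
    -- Byzantine agents always send `x`
    (hbyz : ∀ t, ∀ j ∈ N \ H, ∀ i ∈ H, r t j i = x)
    -- retained sets: the `n - f - 1` received values closest to the agent's own
    (M : ℕ → ι → Finset ι)
    (hMsub : ∀ t, ∀ i ∈ H, M t i ⊆ N.erase i)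
    (hMcard : ∀ t, ∀ i ∈ H, (M t i).card = n - f - 1)
    (hMfilter : ∀ t, ∀ i ∈ H, ∀ j ∈ M t i, ∀ l ∈ N.erase i \ M t i,
      ‖xs t i - r t j i‖ ≤ ‖xs t i - r t l i‖)
    -- projected consensus update
    (α : ℝ)
    (hupdate : ∀ t, ∀ i ∈ H,
      xs (t + 1) i = P i (xs t i + α • ∑ j ∈ M t i, (r t j i - xs t i)))
    -- initial condition
    (hinit : ∀ i ∈ T, xs 0 i = x) :
    ∀ t, ∀ i ∈ T, xs t i = x := by
  intro t
  induction t with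
  | zero => exact hinit
  | succ t ih =>
    intro i hi
    have hiH : i ∈ H := hTH hi
    have hxi : xs t i = x := ih i hi
    set Z : Finset ι := T.erase i ∪ (N \ H) with hZdef
    have hZr : ∀ l ∈ Z, r t l i = x := by
      intro l hl
      rcases Finset.mem_union.mp hl with hl | hl
      · have hlT : l ∈ T := Finset.mem_of_mem_erase hl
        rw [hnormal t l (hTH hlT) i]
        exact ih l hlT
      · exact hbyz t l hl i hiH
    have hdisj : Disjoint (T.erase i) (N \ H) := by
      refine Finset.disjoint_left.mpr ?_
      intro a ha haN
      exact (Finset.mem_sdiff.mp haN).2 (hTH (Finset.mem_of_mem_erase ha))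
    have hfn : f ≤ n := by omega
    have hNH : (N \ H).card = f := by
      rw [Finset.card_sdiff_of_subset hHN, hN, hH]; omega
    have hZcard : Z.card = n - f - 1 := by
      rw [hZdef, Finset.card_union_of_disjoint hdisj,
        Finset.card_erase_of_mem hi, hT, hNH]
      omega
    have hZsub : Z ⊆ N.erase i := by
      intro a ha
      rcases Finset.mem_union.mp ha with ha | ha
      · exact Finset.mem_erase.mpr ⟨(Finset.mem_erase.mp ha).1,
          hHN (hTH (Finset.mem_of_mem_erase ha))⟩
      · refine Finset.mem_erase.mpr ⟨?_, (Finset.mem_sdiff.mp ha).1⟩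
        intro h; exact (Finset.mem_sdiff.mp ha).2 (h ▸ hiH)
    have hMx : ∀ j ∈ M t i, r t j i = x := by
      intro j hj
      by_cases hjZ : j ∈ Z
      · exact hZr j hjZ
      · have hne' : (Z \ M t i).Nonempty := by
          by_contra hcon
          have hsub : Z ⊆ M t i := by
            intro a ha
            by_contra ha'
            exact hcon ⟨a, Finset.mem_sdiff.mpr ⟨ha, ha'⟩⟩
          have : Z = M t i := Finset.eq_of_subset_of_card_le hsub
            (by rw [hZcard, hMcard t i hiH])
          exact hjZ (this ▸ hj)
        obtain ⟨l, hl⟩ := hne'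
        have hlZ := (Finset.mem_sdiff.mp hl).1
        have hlmem : l ∈ N.erase i \ M t i :=
          Finset.mem_sdiff.mpr ⟨hZsub hlZ, (Finset.mem_sdiff.mp hl).2⟩
        have hle := hMfilter t i hiH j hj l hlmem
        rw [hxi, hZr l hlZ, sub_self, norm_zero] at hle
        have : x - r t j i = 0 := norm_le_zero_iff.mp hle
        have := sub_eq_zero.mp this
        exact this.symm
    have hsum : (∑ j ∈ M t i, (r t j i - xs t i)) = 0 := by
      refine Finset.sum_eq_zero ?_
      intro j hj
      rw [hMx j hj, hxi, sub_self]
    rw [hupdate t i hiH, hsum, smul_zero, add_zero, hxi]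
    obtain ⟨hmem, hle⟩ := hP i hiH x
    have h0 := hle x (hxT i hi)
    rw [dist_self] at h0
    exact (dist_le_zero.mp h0).symm
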